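/- For 0 < ξ < λ₀ real, the Cauchy principal value P.V. ∫_0^{λ₀} λ√(λ₀-λ)/(ξ-λ) dλ equals -(2/3)λ₀^{3/2} + 2√λ₀·ξ - 2√(λ₀-ξ)·ξ·log(√(λ₀-ξ)+√λ₀) + √(λ₀-ξ)·ξ·log ξ. -/

import Mathlib

open MeasureTheory intervalIntegral Set Filter

noncomputable def pvAuxG (lam0 ξ x : ℝ) : ℝ :=
  2/3 * Real.sqrt (lam0 - x) ^ 3 - 2 * ξ * Real.sqrt (lam0 - x)
    - ξ * Real.sqrt (lam0 - ξ) * Real.log (Real.sqrt (lam0 - x) - Real.sqrt (lam0 - ξ))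
    + ξ * Real.sqrt (lam0 - ξ) * Real.log (Real.sqrt (lam0 - x) + Real.sqrt (lam0 - ξ))

lemma pv_aux_deriv (lam0 ξ x : ℝ) (hξ : ξ < lam0) (hx : x < lam0) (hne : x ≠ ξ) :
    HasDerivAt (pvAuxG lam0 ξ) (x * Real.sqrt (lam0 - x) / (ξ - x)) x := by
  unfold pvAuxG
  set s := Real.sqrt (lam0 - x) with hsdef
  set a := Real.sqrt (lam0 - ξ) with hadef
  have hlx : 0 < lam0 - x := by linarith
  have hs : 0 < s := Real.sqrt_pos.2 hlx
  have hs2 : s ^ 2 = lam0 - x := Real.sq_sqrt hlx.le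
  have ha : 0 < a := Real.sqrt_pos.2 (by linarith)
  have ha2 : a ^ 2 = lam0 - ξ := Real.sq_sqrt (by linarith)
  have hsa : s ≠ a := by
    intro h
    exact hne (by nlinarith)
  have hS : HasDerivAt (fun y => Real.sqrt (lam0 - y)) (-(1/(2*s))) x := by
    have h := (Real.hasDerivAt_sqrt hlx.ne').comp x ((hasDerivAt_id x).const_sub lam0)
    refine h.congr_deriv (Eq.symm ?_)
    simp [hsdef]
  have h1 : HasDerivAt (fun y => (2/3) * Real.sqrt (lam0 - y) ^ 3)
      ((2/3) * ((3:ℕ) * s ^ 2 * (-(1/(2*s))))) x := (hS.pow 3).const_mul (2/3)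
  have h2 : HasDerivAt (fun y => 2 * ξ * Real.sqrt (lam0 - y)) (2 * ξ * (-(1/(2*s)))) x :=
    hS.const_mul (2*ξ)
  have h3 : HasDerivAt (fun y => Real.log (Real.sqrt (lam0 - y) - a)) ((-(1/(2*s)))/(s - a)) x :=
    (hS.sub_const a).log (sub_ne_zero.2 hsa)
  have h4 : HasDerivAt (fun y => Real.log (Real.sqrt (lam0 - y) + a)) ((-(1/(2*s)))/(s + a)) x :=
    (hS.add_const a).log (by positivity)
  have hsum := ((h1.sub h2).sub (h3.const_mul (ξ * a))).add (h4.const_mul (ξ * a))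
  refine hsum.congr_deriv (Eq.symm ?_)
  have hξx : ξ - x ≠ 0 := sub_ne_zero.2 (Ne.symm hne)
  have hsane : s - a ≠ 0 := sub_ne_zero.2 hsa
  have hsape : s + a ≠ 0 := by positivity
  have hfac : ξ - x = (s - a) * (s + a) := by nlinarith
  rw [hfac]
  field_simp
  linear_combination (6*s^2) * hs2 - (6*s^2) * ha2

lemma pv_aux_cont (lam0 ξ x : ℝ) (hξ : ξ < lam0)
    (hne : Real.sqrt (lam0 - x) ≠ Real.sqrt (lam0 - ξ)) :
    ContinuousAt (pvAuxG lam0 ξ) x := by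
  have ha : 0 < Real.sqrt (lam0 - ξ) := Real.sqrt_pos.2 (by linarith)
  have hS : ContinuousAt (fun y => Real.sqrt (lam0 - y)) x := by fun_prop
  have hl1 : ContinuousAt
      (fun y => Real.log (Real.sqrt (lam0 - y) - Real.sqrt (lam0 - ξ))) x :=
    (hS.sub continuousAt_const).log (sub_ne_zero.2 hne)
  have hl2 : ContinuousAt
      (fun y => Real.log (Real.sqrt (lam0 - y) + Real.sqrt (lam0 - ξ))) x :=
    (hS.add continuousAt_const).log
      (ne_of_gt (add_pos_of_nonneg_of_pos (Real.sqrt_nonneg _) ha))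
  unfold pvAuxG
  exact ((((hS.pow 3).const_mul _).sub (hS.const_mul _)).sub (hl1.const_mul _)).add
    (hl2.const_mul _)

lemma pv_aux_int (lam0 ξ lo hi : ℝ) (hle : lo ≤ hi) (hni : ξ ∉ Set.Icc lo hi) :
    IntervalIntegrable (fun lam => lam * Real.sqrt (lam0 - lam) / (ξ - lam))
      MeasureTheory.volume lo hi := by
  apply ContinuousOn.intervalIntegrable_of_Icc hle
  apply ContinuousOn.div
  · fun_prop
  · fun_prop
  · intro x hx
    refine sub_ne_zero.2 fun h => hni ?_
    rwa [h]

lemma pv_aux_ftc1 (lam0 ξ ε : ℝ) (h0 : 0 < ξ) (h1 : ξ < lam0) (hε : 0 < ε) (hεξ : ε < ξ) :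
    ∫ lam in Set.Ioo 0 (ξ - ε), lam * Real.sqrt (lam0 - lam) / (ξ - lam)
      = pvAuxG lam0 ξ (ξ - ε) - pvAuxG lam0 ξ 0 := by
  rw [← MeasureTheory.integral_Ioc_eq_integral_Ioo,
      ← intervalIntegral.integral_of_le (by linarith : (0:ℝ) ≤ ξ - ε)]
  apply intervalIntegral.integral_eq_sub_of_hasDerivAt_of_le (by linarith)
  · intro x hx
    refine (pv_aux_cont lam0 ξ x h1 ?_).continuousWithinAt
    have hxξ : x < ξ := lt_of_le_of_lt hx.2 (by linarith)
    exact (Real.sqrt_lt_sqrt (by linarith) (by linarith)).ne'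
  · intro x hx
    exact pv_aux_deriv lam0 ξ x h1 (by linarith [hx.2]) (by linarith [hx.2])
  · exact pv_aux_int lam0 ξ 0 (ξ - ε) (by linarith)
      (fun h => absurd h.2 (by push_neg; linarith))

lemma pv_aux_ftc2 (lam0 ξ ε : ℝ) (h0 : 0 < ξ) (h1 : ξ < lam0) (hε : 0 < ε)
    (hεξ : ε < lam0 - ξ) :
    ∫ lam in Set.Ioo (ξ + ε) lam0, lam * Real.sqrt (lam0 - lam) / (ξ - lam)
      = pvAuxG lam0 ξ lam0 - pvAuxG lam0 ξ (ξ + ε) := by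
  rw [← MeasureTheory.integral_Ioc_eq_integral_Ioo,
      ← intervalIntegral.integral_of_le (by linarith : ξ + ε ≤ lam0)]
  apply intervalIntegral.integral_eq_sub_of_hasDerivAt_of_le (f := pvAuxG lam0 ξ) (by linarith)
  · intro x hx
    obtain ⟨hxa, hxb⟩ := hx
    refine (pv_aux_cont lam0 ξ x h1 ?_).continuousWithinAt
    exact (Real.sqrt_lt_sqrt (by linarith) (by linarith)).ne
  · intro x hx
    exact pv_aux_deriv lam0 ξ x h1 hx.2 (by linarith [hx.1])
  · exact pv_aux_int lam0 ξ (ξ + ε) lam0 (by linarith)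
      (fun h => absurd h.1 (by push_neg; linarith))

lemma pv_aux_diff (lam0 ξ : ℝ) (h0 : 0 < ξ) (h1 : ξ < lam0) :
    Filter.Tendsto (fun ε => pvAuxG lam0 ξ (ξ - ε) - pvAuxG lam0 ξ (ξ + ε))
      (nhdsWithin 0 (Set.Ioi 0)) (nhds 0) := by
  set a := Real.sqrt (lam0 - ξ) with hadef
  have ha : 0 < a := Real.sqrt_pos.2 (by linarith)
  have ha2 : a ^ 2 = lam0 - ξ := Real.sq_sqrt (by linarith)
  set H : ℝ → ℝ := fun ε =>
    (2/3 * Real.sqrt (lam0 - ξ + ε) ^ 3 - 2 * ξ * Real.sqrt (lam0 - ξ + ε)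
      + 2 * ξ * a * Real.log (Real.sqrt (lam0 - ξ + ε) + a))
    - (2/3 * Real.sqrt (lam0 - ξ - ε) ^ 3 - 2 * ξ * Real.sqrt (lam0 - ξ - ε)
      + 2 * ξ * a * Real.log (Real.sqrt (lam0 - ξ - ε) + a)) with hHdef
  have heq : ∀ ε ∈ Set.Ioo (0:ℝ) (lam0 - ξ),
      pvAuxG lam0 ξ (ξ - ε) - pvAuxG lam0 ξ (ξ + ε) = H ε := by
    intro ε hε
    obtain ⟨hε1, hε2⟩ := hε
    have hp : 0 < lam0 - ξ + ε := by linarith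
    have hm : 0 < lam0 - ξ - ε := by linarith
    have hsp : 0 < Real.sqrt (lam0 - ξ + ε) := Real.sqrt_pos.2 hp
    have hsm : 0 < Real.sqrt (lam0 - ξ - ε) := Real.sqrt_pos.2 hm
    have hsp2 : Real.sqrt (lam0 - ξ + ε) ^ 2 = lam0 - ξ + ε := Real.sq_sqrt hp.le
    have hsm2 : Real.sqrt (lam0 - ξ - ε) ^ 2 = lam0 - ξ - ε := Real.sq_sqrt hm.le
    have hd1 : Real.sqrt (lam0 - ξ + ε) - a = ε / (Real.sqrt (lam0 - ξ + ε) + a) := by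
      rw [eq_div_iff (by positivity)]
      linear_combination hsp2 - ha2
    have hd2 : a - Real.sqrt (lam0 - ξ - ε) = ε / (Real.sqrt (lam0 - ξ - ε) + a) := by
      rw [eq_div_iff (by positivity)]
      linear_combination ha2 - hsm2
    unfold pvAuxG
    rw [show lam0 - (ξ - ε) = lam0 - ξ + ε by ring, show lam0 - (ξ + ε) = lam0 - ξ - ε by ring]
    rw [show Real.sqrt (lam0 - ξ - ε) - a = -(a - Real.sqrt (lam0 - ξ - ε)) by ring,
      Real.log_neg_eq_log, hd1, hd2,
      Real.log_div hε1.ne' (by positivity), Real.log_div hε1.ne' (by positivity), hHdef]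
    ring
  have hH0 : H 0 = 0 := by
    simp [hHdef]
  have hHc : Filter.Tendsto H (nhds 0) (nhds 0) := by
    have hca : ContinuousAt H 0 := by
      have hs1 : ContinuousAt (fun ε : ℝ => Real.sqrt (lam0 - ξ + ε)) 0 := by fun_prop
      have hs2 : ContinuousAt (fun ε : ℝ => Real.sqrt (lam0 - ξ - ε)) 0 := by fun_prop
      have hn1 : Real.sqrt (lam0 - ξ + 0) + a ≠ 0 := by
        rw [add_zero]; exact ne_of_gt (by positivity)
      have hn2 : Real.sqrt (lam0 - ξ - 0) + a ≠ 0 := by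
        rw [sub_zero]; exact ne_of_gt (by positivity)
      exact (((hs1.pow 3).const_mul _).sub (hs1.const_mul _)).add
          (((hs1.add continuousAt_const).log hn1).const_mul _) |>.sub
        ((((hs2.pow 3).const_mul _).sub (hs2.const_mul _)).add
          (((hs2.add continuousAt_const).log hn2).const_mul _))
    simpa [hH0] using hca.tendsto
  have hev : (fun ε => pvAuxG lam0 ξ (ξ - ε) - pvAuxG lam0 ξ (ξ + ε))
      =ᶠ[nhdsWithin 0 (Set.Ioi 0)] H := by
    filter_upwards [Ioo_mem_nhdsGT_of_mem
      (Set.mem_Ico.2 ⟨le_refl (0:ℝ), (by linarith : (0:ℝ) < lam0 - ξ)⟩)] with ε hε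
    exact heq ε hε
  exact Filter.Tendsto.congr' hev.symm (hHc.mono_left nhdsWithin_le_nhds)

lemma pv_aux_value (lam0 ξ : ℝ) (h0 : 0 < ξ) (h1 : ξ < lam0) :
    pvAuxG lam0 ξ lam0 - pvAuxG lam0 ξ 0 =
      -(2/3) * lam0 ^ ((3:ℝ)/2) + 2 * Real.sqrt lam0 * ξ
      - 2 * Real.sqrt (lam0 - ξ) * ξ * Real.log (Real.sqrt (lam0 - ξ) + Real.sqrt lam0)
      + Real.sqrt (lam0 - ξ) * ξ * Real.log ξ := by
  set a := Real.sqrt (lam0 - ξ) with hadef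
  have ha : 0 < a := Real.sqrt_pos.2 (by linarith)
  have ha2 : a ^ 2 = lam0 - ξ := Real.sq_sqrt (by linarith)
  have hl0 : 0 < lam0 := by linarith
  have hb : 0 < Real.sqrt lam0 := Real.sqrt_pos.2 hl0
  have hb2 : Real.sqrt lam0 ^ 2 = lam0 := Real.sq_sqrt hl0.le
  have hG : pvAuxG lam0 ξ lam0 = 0 := by
    unfold pvAuxG
    rw [sub_self, Real.sqrt_zero, zero_sub, Real.log_neg_eq_log]
    ring_nf
  have hd : Real.sqrt lam0 - a = ξ / (Real.sqrt lam0 + a) := by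
    rw [eq_div_iff (ne_of_gt (add_pos hb ha))]
    linear_combination hb2 - ha2
  have hr : lam0 ^ ((3:ℝ)/2) = Real.sqrt lam0 ^ 3 := by
    rw [show ((3:ℝ)/2) = (1/2:ℝ) * 3 by norm_num, Real.rpow_mul hl0.le, ← Real.sqrt_eq_rpow,
      show (3:ℝ) = ((3:ℕ):ℝ) by norm_num, Real.rpow_natCast]
  rw [hG, zero_sub, hr]
  unfold pvAuxG
  rw [sub_zero, hd, Real.log_div h0.ne' (ne_of_gt (add_pos hb ha)),
    add_comm a (Real.sqrt lam0)]
  ring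

theorem pv_integral_mul_sqrt (lam0 ξ : ℝ) (h0 : 0 < ξ) (h1 : ξ < lam0) :
    Filter.Tendsto
      (fun ε : ℝ =>
        (∫ lam in Set.Ioo 0 (ξ - ε), lam * Real.sqrt (lam0 - lam) / (ξ - lam)) +
        ∫ lam in Set.Ioo (ξ + ε) lam0, lam * Real.sqrt (lam0 - lam) / (ξ - lam))
      (nhdsWithin 0 (Set.Ioi 0))
      (nhds (-(2/3) * lam0 ^ ((3:ℝ)/2) + 2 * Real.sqrt lam0 * ξ
        - 2 * Real.sqrt (lam0 - ξ) * ξ * Real.log (Real.sqrt (lam0 - ξ) + Real.sqrt lam0)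
        + Real.sqrt (lam0 - ξ) * ξ * Real.log ξ)) := by
  have hδ : (0:ℝ) < min ξ (lam0 - ξ) := lt_min h0 (by linarith)
  have hev : (fun ε : ℝ =>
        (∫ lam in Set.Ioo 0 (ξ - ε), lam * Real.sqrt (lam0 - lam) / (ξ - lam)) +
        ∫ lam in Set.Ioo (ξ + ε) lam0, lam * Real.sqrt (lam0 - lam) / (ξ - lam))
      =ᶠ[nhdsWithin 0 (Set.Ioi 0)]
      (fun ε => (pvAuxG lam0 ξ lam0 - pvAuxG lam0 ξ 0)
        + (pvAuxG lam0 ξ (ξ - ε) - pvAuxG lam0 ξ (ξ + ε))) := by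
    filter_upwards [Ioo_mem_nhdsGT_of_mem
      (Set.mem_Ico.2 ⟨le_refl (0:ℝ), hδ⟩)] with ε hε
    obtain ⟨hε1, hε2⟩ := hε
    rw [pv_aux_ftc1 lam0 ξ ε h0 h1 hε1 (lt_of_lt_of_le hε2 (min_le_left _ _)),
      pv_aux_ftc2 lam0 ξ ε h0 h1 hε1 (lt_of_lt_of_le hε2 (min_le_right _ _))]
    ring
  refine Filter.Tendsto.congr' hev.symm ?_
  rw [← pv_aux_value lam0 ξ h0 h1]
  have := (tendsto_const_nhds (x := pvAuxG lam0 ξ lam0 - pvAuxG lam0 ξ 0)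
    (f := nhdsWithin (0:ℝ) (Set.Ioi 0))).add (pv_aux_diff lam0 ξ h0 h1)
  simpa using this
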